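/- arXiv:2112.02317 — 2 statements merged into one kernel-verified Lean document; each statement's English description precedes it below -/
import Mathlib

section
/- Let a and b be positive real numbers and set A = (√(2π) / Γ(a/b)) · e^{1 - a/b} · b^{1/2 - a/b}. Then, as n → ∞ through the natural numbers, the product ∏_{k=0}^{n-1} (a + k·b) is asymptotically equivalent to A · (a - b + b·n)^{a/b + n - 1/2} · e^{-n}; that is, the quotient of the two sequences tends to 1. (Determination of Euler's constant A, solving Faber's task.) -/
open Filter Asymptotics Real Topology

theorem euler_constant_A (a b : ℝ) (ha : 0 < a) (hb : 0 < b) (A : ℝ)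
    (hA : A = (Real.sqrt (2 * Real.pi) / Real.Gamma (a / b)) *
        Real.exp (1 - a / b) * b ^ ((1 : ℝ) / 2 - a / b)) :
    (fun n : ℕ => ∏ k ∈ Finset.range n, (a + k * b)) ~[atTop]
      (fun n : ℕ =>
        A * (a - b + b * n) ^ (a / b + n - 1 / 2) * Real.exp (-(n : ℝ))) := by
  set x := a / b with hxdef
  have hx0 : 0 < x := div_pos ha hb
  have hΓ : 0 < Real.Gamma x := Real.Gamma_pos_of_pos hx0
  have hπ : (0:ℝ) < Real.sqrt (2 * Real.pi) := Real.sqrt_pos.2 (by positivity)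
  have hA0 : 0 < A := by rw [hA]; positivity
  -- the comparison sequence
  set g : ℕ → ℝ := fun n =>
    (Real.sqrt 2 * Stirling.stirlingSeq n * Real.Gamma x) /
      (Real.GammaSeq x n * Real.sqrt (2 * Real.pi) * Real.exp (1 - x)) *
    ((((n:ℝ)/((n:ℝ)+x-1)) ^ (((n:ℝ)+x-1) + 1/2)) * ((n:ℝ)/(x+(n:ℝ)))) with hgdef
  have ht : Tendsto (fun n : ℕ => (n:ℝ) + x - 1) atTop atTop :=
    (tendsto_atTop_add_const_right _ (x-1)
      (tendsto_natCast_atTop_atTop (R := ℝ))).congr (fun n => by ring)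
  -- limit of the middle rpow factor
  have hbase : Tendsto (fun n : ℕ => (n:ℝ)/((n:ℝ)+x-1)) atTop (𝓝 1) := by
    have h1 : Tendsto (fun n : ℕ => 1 + (1-x)/((n:ℝ)+x-1)) atTop (𝓝 1) := by
      simpa using tendsto_const_nhds.add (tendsto_const_nhds.div_atTop ht)
    refine h1.congr' ?_
    filter_upwards [ht.eventually_gt_atTop 0] with n hn
    field_simp
    ring
  have hrpow : Tendsto (fun n : ℕ =>
      (((n:ℝ)/((n:ℝ)+x-1)) ^ (((n:ℝ)+x-1) + 1/2))) atTop (𝓝 (Real.exp (1-x))) := by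
    have hmain : Tendsto (fun n : ℕ => (((n:ℝ)/((n:ℝ)+x-1)) ^ ((n:ℝ)+x-1)))
        atTop (𝓝 (Real.exp (1-x))) := by
      have := (tendsto_one_add_div_rpow_exp (1-x)).comp ht
      refine this.congr' ?_
      filter_upwards [ht.eventually_gt_atTop 0] with n hn
      simp only [Function.comp_apply]
      congr 1
      field_simp
      ring
    have hhalf : Tendsto (fun n : ℕ => (((n:ℝ)/((n:ℝ)+x-1)) ^ ((1:ℝ)/2)))
        atTop (𝓝 1) := by
      have := hbase.rpow (tendsto_const_nhds (x := (1:ℝ)/2)) (Or.inl one_ne_zero)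
      simpa using this
    have := hmain.mul hhalf
    rw [mul_one] at this
    refine this.congr' ?_
    filter_upwards [ht.eventually_gt_atTop 0, eventually_gt_atTop 0] with n hn hn0
    have hb0 : 0 < (n:ℝ)/((n:ℝ)+x-1) := by positivity
    rw [← Real.rpow_add hb0]
  -- limit of g
  have hglim : Tendsto g atTop (𝓝 1) := by
    have hfrac : Tendsto (fun n : ℕ => (n:ℝ)/(x+(n:ℝ))) atTop (𝓝 1) := by
      have h1 : Tendsto (fun n : ℕ => 1 - x/(x+(n:ℝ))) atTop (𝓝 1) := by
        have hx' : Tendsto (fun n : ℕ => x + (n:ℝ)) atTop atTop :=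
          tendsto_atTop_add_const_left _ x (tendsto_natCast_atTop_atTop (R := ℝ))
        simpa using tendsto_const_nhds.sub (tendsto_const_nhds.div_atTop hx')
      refine h1.congr' ?_
      filter_upwards [eventually_gt_atTop 0] with n hn
      have : x + (n:ℝ) ≠ 0 := by positivity
      field_simp
      ring
    have hS : Tendsto (fun n : ℕ => Stirling.stirlingSeq n) atTop (𝓝 (Real.sqrt π)) :=
      Stirling.tendsto_stirlingSeq_sqrt_pi
    have hG : Tendsto (fun n : ℕ => Real.GammaSeq x n) atTop (𝓝 (Real.Gamma x)) :=
      Real.GammaSeq_tendsto_Gamma x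
    have hnum : Tendsto (fun n : ℕ => Real.sqrt 2 * Stirling.stirlingSeq n * Real.Gamma x)
        atTop (𝓝 (Real.sqrt 2 * Real.sqrt π * Real.Gamma x)) :=
      (tendsto_const_nhds.mul hS).mul tendsto_const_nhds
    have hden : Tendsto (fun n : ℕ =>
        Real.GammaSeq x n * Real.sqrt (2 * Real.pi) * Real.exp (1 - x))
        atTop (𝓝 (Real.Gamma x * Real.sqrt (2 * Real.pi) * Real.exp (1 - x))) :=
      (hG.mul tendsto_const_nhds).mul tendsto_const_nhds
    have hdiv := (hnum.div hden (by positivity)).mul (hrpow.mul hfrac)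
    have : Real.sqrt 2 * Real.sqrt π * Real.Gamma x /
        (Real.Gamma x * Real.sqrt (2 * Real.pi) * Real.exp (1 - x)) *
        (Real.exp (1-x) * 1) = 1 := by
      rw [← Real.sqrt_mul (by norm_num : (0:ℝ) ≤ 2) π]
      have he : Real.exp (1-x) ≠ 0 := Real.exp_ne_zero _
      field_simp
    rw [this] at hdiv
    exact hdiv
  -- conclude
  refine (fun (_ : ∀ᶠ n : ℕ in atTop, A * (a - b + b * n) ^ (a / b + n - 1 / 2) * Real.exp (-(n : ℝ)) = 0 → ∏ k ∈ Finset.range n, (a + k * b) = 0) h => Asymptotics.isEquivalent_of_tendsto_one h) ?_ ?_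
  · filter_upwards [ht.eventually_gt_atTop 0] with n hn h
    exfalso
    have h1 : a - b + b * n = b * ((n:ℝ) + x - 1) := by
      have : b * x = a := by rw [hxdef]; field_simp
      linarith [this]
    have : A * (a - b + b * n) ^ (x + n - 1/2) * Real.exp (-(n:ℝ)) ≠ 0 := by
      have h2 : (0:ℝ) < a - b + b * n := by rw [h1]; positivity
      positivity
    exact this h
  · refine hglim.congr' ?_
    filter_upwards [eventually_ge_atTop 1, ht.eventually_gt_atTop 0] with n hn htn
    have hN0 : (0:ℝ) < n := by exact_mod_cast hn
    set N : ℝ := (n:ℝ) with hNdef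
    set t : ℝ := N + x - 1 with htdef
    have ht0 : 0 < t := htn
    -- facts
    have hbx : b * x = a := by rw [hxdef]; field_simp
    have hGpos : 0 < Real.GammaSeq x n := by
      rw [Real.GammaSeq]
      have h1 : (0:ℝ) < (n:ℝ) ^ x := Real.rpow_pos_of_pos hN0 _
      have h2 : (0:ℝ) < ∏ j ∈ Finset.range (n + 1), (x + j) :=
        Finset.prod_pos fun j _ => by positivity
      positivity
    have hSden : (0:ℝ) < Real.sqrt (2 * N) * ((N / Real.exp 1) ^ n) := by positivity
    have hfact : (n.factorial : ℝ) = Stirling.stirlingSeq n * (Real.sqrt (2 * N) * (N / Real.exp 1) ^ n) := by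
      rw [Stirling.stirlingSeq, div_mul_cancel₀]
      exact hSden.ne'
    have hP : (∏ k ∈ Finset.range n, (x + k)) =
        N ^ x * (n.factorial : ℝ) / (Real.GammaSeq x n * (x + N)) := by
      rw [Real.GammaSeq, Finset.prod_range_succ]
      have hprod : (0:ℝ) < ∏ j ∈ Finset.range n, (x + j) :=
        Finset.prod_pos fun j _ => by positivity
      field_simp
      ring
    have hu : (∏ k ∈ Finset.range n, (a + k * b)) = b ^ n * ∏ k ∈ Finset.range n, (x + k) := by
      calc (∏ k ∈ Finset.range n, (a + k * b))
          = ∏ k ∈ Finset.range n, (b * (x + k)) :=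
            Finset.prod_congr rfl fun k _ => by rw [mul_add, hbx]; ring
        _ = b ^ n * ∏ k ∈ Finset.range n, (x + k) := by
            rw [Finset.prod_mul_distrib, Finset.prod_const, Finset.card_range]
    -- rewrite v
    have hv : A * (a - b + b * N) ^ (x + N - 1/2) * Real.exp (-N) =
        (Real.sqrt (2 * Real.pi) / Real.Gamma x * Real.exp (1 - x)) *
          (b ^ n * (t ^ (t + 1/2)) * Real.exp (-N)) := by
      have h1 : a - b + b * N = b * t := by
        rw [htdef, show b * (N + x - 1) = b * N + b * x - b from by ring, hbx]; ring
      have h2 : x + N - 1/2 = t + 1/2 := by rw [htdef]; ring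
      have h5 : b ^ (t + 1/2) = b ^ (x - 1/2) * b ^ n := by
        rw [← Real.rpow_natCast b n, ← Real.rpow_add hb]
        congr 1
        rw [htdef, hNdef]; ring
      have h6 : A * b ^ (x - 1/2) = Real.sqrt (2*Real.pi) / Real.Gamma x * Real.exp (1-x) := by
        rw [hA, mul_assoc, ← Real.rpow_add hb]
        norm_num
      rw [h1, h2, Real.mul_rpow hb.le ht0.le, h5]
      linear_combination (b ^ n * t ^ (t + 1/2) * Real.exp (-N)) * h6
    -- power facts
    have hsplit : Real.sqrt (2 * N) = Real.sqrt 2 * N ^ ((1:ℝ)/2) := by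
      rw [Real.sqrt_mul (by norm_num : (0:ℝ) ≤ 2) N, Real.sqrt_eq_rpow N]
    have hpow : (N / Real.exp 1) ^ n = N ^ n * Real.exp (-N) := by
      rw [div_pow, Real.exp_one_pow, Real.exp_neg, hNdef, div_eq_mul_inv]
    have hNfact : N ^ x * N ^ ((1:ℝ)/2) * N ^ n = N ^ (t + 1/2) * N := by
      rw [← Real.rpow_natCast N n, ← Real.rpow_add hN0, ← Real.rpow_add hN0,
        (Real.rpow_add_one hN0.ne' (t + 1/2)).symm]
      congr 1
      rw [htdef, hNdef]; ring
    have hdivr : (N/t) ^ (t + 1/2) = N ^ (t + 1/2) / t ^ (t + 1/2) :=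
      Real.div_rpow hN0.le ht0.le _
    -- assemble
    have huv : (∏ k ∈ Finset.range n, (a + k * b)) =
        (Real.sqrt 2 * Stirling.stirlingSeq n * (N ^ (t + 1/2) * N) * Real.exp (-N) * b ^ n) /
          (Real.GammaSeq x n * (x + N)) := by
      rw [hu, hP, hfact, hsplit, hpow]
      rw [show N ^ x * (Stirling.stirlingSeq n *
            (Real.sqrt 2 * N ^ ((1:ℝ)/2) * (N ^ n * Real.exp (-N)))) =
          Real.sqrt 2 * Stirling.stirlingSeq n * (N ^ x * N ^ ((1:ℝ)/2) * N ^ n) *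
            Real.exp (-N) from by ring, hNfact]
      ring
    have hGne : Real.GammaSeq x n ≠ 0 := hGpos.ne'
    have hxN : (0:ℝ) < x + N := by positivity
    have htp : (0:ℝ) < t ^ (t + 1/2) := Real.rpow_pos_of_pos ht0 _
    have hbp : (0:ℝ) < b ^ n := by positivity
    have hep : Real.exp (-N) ≠ 0 := Real.exp_ne_zero _
    have he1 : Real.exp (1 - x) ≠ 0 := Real.exp_ne_zero _
    simp only [Pi.div_apply]
    rw [huv, hv, hgdef]
    simp only
    rw [← hNdef, ← htdef, hdivr]
    field_simp
end

section
/- Let a and b be positive real numbers. As n → ∞ through the natural numbers, the product ∏_{k=0}^{n-1} (a + k·b) is asymptotically equivalent to (b^n / Γ(a/b)) · √(2π) · (n + a/b - 1)^{n + a/b - 1/2} · e^{-(n + a/b - 1)}; that is, the quotient of the two sequences tends to 1. (The intermediate asymptotic obtained by applying Stirling's formula to the Gamma-function representation of Γ_E.) -/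
set_option maxHeartbeats 1000000
open Filter Asymptotics Real Topology

theorem euler_gammaE_stirling_asymptotic (a b : ℝ) (ha : 0 < a) (hb : 0 < b) :
    (fun n : ℕ => ∏ k ∈ Finset.range n, (a + k * b)) ~[atTop]
      (fun n : ℕ =>
        (b ^ n / Real.Gamma (a / b)) * Real.sqrt (2 * Real.pi) *
          ((n : ℝ) + a / b - 1) ^ ((n : ℝ) + a / b - 1 / 2) *
          Real.exp (-((n : ℝ) + a / b - 1))) := by
  set x := a / b with hxdef
  have hx : 0 < x := div_pos ha hb
  have hΓ : 0 < Real.Gamma x := Real.Gamma_pos_of_pos hx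
  clear_value x
  have hz : ∀ᶠ n : ℕ in atTop, (b ^ n / Real.Gamma x) * Real.sqrt (2 * Real.pi) *
      ((n : ℝ) + x - 1) ^ ((n : ℝ) + x - 1 / 2) * Real.exp (-((n : ℝ) + x - 1)) ≠ 0 := by
    filter_upwards [eventually_ge_atTop 1] with n hn
    have hn1 : (1:ℝ) ≤ (n:ℝ) := by exact_mod_cast hn
    have hy : (0:ℝ) < (n:ℝ) + x - 1 := by linarith
    positivity
  rw [isEquivalent_iff_tendsto_one hz]
  -- the candidate ratio
  set F : ℕ → ℝ := fun n =>
    (Real.Gamma x / Real.GammaSeq x n) * (Stirling.stirlingSeq n / Real.sqrt π) *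
      ((n : ℝ) ^ ((1:ℝ)/2) * (n : ℝ) ^ ((1:ℝ)/2) / (x + n)) *
      (Real.exp (x - 1) / (1 + (x - 1) / (n : ℝ)) ^ ((n : ℝ) + x - 1 / 2)) with hFdef
  have h1 : Tendsto (fun n : ℕ => Real.Gamma x / Real.GammaSeq x n) atTop (𝓝 1) := by
    simpa [Pi.div_def, div_self hΓ.ne'] using (tendsto_const_nhds (x := Real.Gamma x)).div (Real.GammaSeq_tendsto_Gamma x) hΓ.ne'
  have h2 : Tendsto (fun n : ℕ => Stirling.stirlingSeq n / Real.sqrt π) atTop (𝓝 1) := by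
    simpa [div_self (Real.sqrt_pos.mpr Real.pi_pos).ne'] using
      Stirling.tendsto_stirlingSeq_sqrt_pi.div_const (Real.sqrt π)
  have h3 : Tendsto (fun n : ℕ => (n : ℝ) ^ ((1:ℝ)/2) * (n : ℝ) ^ ((1:ℝ)/2) / (x + n)) atTop
      (𝓝 1) := by
    have h3a : Tendsto (fun n : ℕ => (n : ℝ) / (x + n)) atTop (𝓝 1) := ?_
    · refine Tendsto.congr' ?_ h3a
      filter_upwards [eventually_ge_atTop 1] with n hn
      have hm : (0:ℝ) < (n:ℝ) := by exact_mod_cast hn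
      rw [← Real.rpow_add hm]
      norm_num
    have hd : Tendsto (fun n : ℕ => x + (n : ℝ)) atTop atTop :=
      tendsto_atTop_add_const_left _ x tendsto_natCast_atTop_atTop
    have h0 : Tendsto (fun n : ℕ => x / (x + (n : ℝ))) atTop (𝓝 0) :=
      Tendsto.div_atTop tendsto_const_nhds hd
    have h1' : Tendsto (fun n : ℕ => 1 - x / (x + (n : ℝ))) atTop (𝓝 1) := by
      simpa using tendsto_const_nhds.sub h0
    refine h1'.congr fun n => ?_
    have hxn : x + (n : ℝ) ≠ 0 := by positivity
    field_simp
    ring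
  have hb1 : Tendsto (fun n : ℕ => 1 + (x - 1) / (n : ℝ)) atTop (𝓝 1) := by
    simpa using tendsto_const_nhds.add (tendsto_const_div_atTop_nhds_zero_nat (x - 1))
  have hb2 : Tendsto (fun n : ℕ => (1 + (x - 1) / (n : ℝ)) ^ (x - 1 / 2)) atTop (𝓝 1) := by
    simpa using hb1.rpow_const (Or.inl one_ne_zero)
  have hb4 : Tendsto (fun n : ℕ => (1 + (x - 1) / (n : ℝ)) ^ ((n : ℝ) + x - 1 / 2)) atTop
      (𝓝 (Real.exp (x - 1))) := by
    have hmul := (Real.tendsto_one_add_div_pow_exp (x - 1)).mul hb2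
    rw [mul_one] at hmul
    refine Tendsto.congr' ?_ hmul
    filter_upwards [hb1.eventually (eventually_gt_nhds zero_lt_one)] with n hpos
    rw [show (n : ℝ) + x - 1 / 2 = (n : ℝ) + (x - 1 / 2) by ring, rpow_add hpos, rpow_natCast]
  have h4 : Tendsto (fun n : ℕ =>
      Real.exp (x - 1) / (1 + (x - 1) / (n : ℝ)) ^ ((n : ℝ) + x - 1 / 2)) atTop (𝓝 1) := by
    simpa [Pi.div_def, div_self (Real.exp_ne_zero _)] using (tendsto_const_nhds (x := Real.exp (x-1))).div hb4 (Real.exp_ne_zero _)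
  have hF : Tendsto F atTop (𝓝 1) := by
    have := ((h1.mul h2).mul h3).mul h4
    simpa [hFdef] using this
  refine Tendsto.congr' ?_ hF
  filter_upwards [eventually_ge_atTop 1] with n hn
  have hn1 : (1:ℝ) ≤ (n:ℝ) := by exact_mod_cast hn
  have hm : (0:ℝ) < (n:ℝ) := by linarith
  have hy : (0:ℝ) < (n:ℝ) + x - 1 := by linarith
  have hc : (0:ℝ) < 1 + (x - 1) / (n:ℝ) := by
    rw [show 1 + (x - 1) / (n:ℝ) = ((n:ℝ) + x - 1) / n by field_simp; ring]
    positivity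
  simp only [hFdef, Pi.div_apply]
  have hg : (b ^ n / Real.Gamma x) * Real.sqrt (2 * Real.pi) *
      ((n : ℝ) + x - 1) ^ ((n : ℝ) + x - 1 / 2) * Real.exp (-((n : ℝ) + x - 1)) ≠ 0 := by
    positivity
  rw [eq_div_iff hg]
  -- identities
  have hP : ∏ k ∈ Finset.range n, (a + k * b)
      = b ^ n * ∏ k ∈ Finset.range n, (x + (k:ℝ)) := by
    calc ∏ k ∈ Finset.range n, (a + ↑k * b) = ∏ k ∈ Finset.range n, (b * (x + ↑k)) :=
          Finset.prod_congr rfl fun k _ => by rw [hxdef]; field_simp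
      _ = _ := by rw [Finset.prod_mul_distrib, Finset.prod_const, Finset.card_range]
  have hGS : Real.GammaSeq x n
      = (n:ℝ) ^ x * (n.factorial : ℝ) / ((∏ k ∈ Finset.range n, (x + (k:ℝ))) * (x + n)) := by
    rw [Real.GammaSeq, Finset.prod_range_succ]
  have hstir : (n.factorial : ℝ)
      = Stirling.stirlingSeq n * (Real.sqrt 2 * (n:ℝ) ^ ((1:ℝ)/2) * ((n:ℝ) ^ n / Real.exp 1 ^ n)) := by
    rw [Stirling.stirlingSeq, div_pow, Real.sqrt_mul (by norm_num : (0:ℝ) ≤ 2),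
      show Real.sqrt ((n:ℕ):ℝ) = (n:ℝ) ^ ((1:ℝ)/2)  from Real.sqrt_eq_rpow _]
    field_simp
  have hy_pow : ((n:ℝ) + x - 1) ^ ((n:ℝ) + x - 1/2)
      = ((n:ℝ) ^ n * ((n:ℝ) ^ x / (n:ℝ) ^ ((1:ℝ)/2))) * (1 + (x - 1) / (n:ℝ)) ^ ((n:ℝ) + x - 1/2) := by
    rw [show (n:ℝ) + x - 1 = (n:ℝ) * (1 + (x - 1) / (n:ℝ)) by field_simp; ring,
      Real.mul_rpow hm.le hc.le]
    congr 1
    rw [show (n:ℝ) + x - 1/2 = (n:ℝ) + (x - 1/2) by ring, Real.rpow_add hm,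
      Real.rpow_natCast, Real.rpow_sub hm]
  have hexp : Real.exp (-((n:ℝ) + x - 1)) = (Real.exp 1 ^ n * Real.exp (x - 1))⁻¹ := by
    rw [Real.exp_neg, Real.exp_one_pow, ← Real.exp_add]
    ring_nf
  have hProd : (0:ℝ) < ∏ k ∈ Finset.range n, (x + (k:ℝ)) :=
    Finset.prod_pos fun k _ => by positivity
  rw [hP, hGS, hy_pow, hexp, Real.sqrt_mul (by norm_num : (0:ℝ) ≤ 2)]
  rw [hstir]
  have h1' : ((n:ℝ)) ^ x ≠ 0 := (Real.rpow_pos_of_pos hm _).ne'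
  have h2' : ((n:ℝ)) ^ ((1:ℝ)/2) ≠ 0 := (Real.rpow_pos_of_pos hm _).ne'
  have h3' : (1 + (x - 1) / (n:ℝ)) ^ ((n:ℝ) + x - 1/2) ≠ 0 := (Real.rpow_pos_of_pos hc _).ne'
  have h4' : Real.sqrt π ≠ 0 := (Real.sqrt_pos.mpr Real.pi_pos).ne'
  have h5' : Real.sqrt 2 ≠ 0 := by positivity
  have h6' : x + (n:ℝ) ≠ 0 := by positivity
  have h7' : (∏ k ∈ Finset.range n, (x + (k:ℝ))) ≠ 0 := hProd.ne'
  have h8' : Stirling.stirlingSeq n ≠ 0 := by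
    obtain ⟨m, rfl⟩ := Nat.exists_eq_succ_of_ne_zero (by omega : n ≠ 0)
    exact (Stirling.stirlingSeq'_pos m).ne'
  have hCpos : (0:ℝ) < (1 + (x - 1) / (n:ℝ)) ^ ((n:ℝ) + x - 1/2) := Real.rpow_pos_of_pos hc _
  generalize hCg : (1 + (x - 1) / (n:ℝ)) ^ ((n:ℝ) + x - 1/2) = C at h3' ⊢
  generalize hAg : ((n:ℝ)) ^ x = A at h1' ⊢
  generalize hBg : ((n:ℝ)) ^ ((1:ℝ)/2) = B at h2' ⊢
  field_simp
end
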